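/- Let X be a real Banach space and A ⊆ X a bounded uniformly weakly null subset. Then A ∪ {0} is compact in the weak topology of X. -/

import Mathlib

/-- A subset `A` of a real Banach space is uniformly weakly null if for every `ε > 0` there is
`N ∈ ℕ` such that `{x ∈ A : |x*(x)| > ε}` has at most `N` elements for every `x*` in the closed
unit ball of the dual. -/
def UniformlyWeaklyNull {X : Type*} [NormedAddCommGroup X] [NormedSpace ℝ X] (A : Set X) : Prop :=
  ∀ ε : ℝ, 0 < ε → ∃ N : ℕ, ∀ f : X →L[ℝ] ℝ, ‖f‖ ≤ 1 →
    {x ∈ A | ε < |f x|}.encard ≤ (N : ℕ∞)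

/-- For a uniformly weakly null set, `{x ∈ A : ε ≤ |f x|}` is finite for any functional `f`. -/
lemma uwn_finite {X : Type*} [NormedAddCommGroup X] [NormedSpace ℝ X] {A : Set X}
    (h : UniformlyWeaklyNull A) (f : X →L[ℝ] ℝ) {ε : ℝ} (hε : 0 < ε) :
    {x ∈ A | ε ≤ |f x|}.Finite := by
  set c : ℝ := ‖f‖ + 1 with hc
  have hc0 : 0 < c := by positivity
  set g : X →L[ℝ] ℝ := c⁻¹ • f with hg
  have hgnorm : ‖g‖ ≤ 1 := by
    refine ContinuousLinearMap.opNorm_le_bound _ zero_le_one (fun x => ?_)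
    have : g x = c⁻¹ * f x := rfl
    rw [this, norm_mul, one_mul]
    have h1 : ‖f x‖ ≤ ‖f‖ * ‖x‖ := f.le_opNorm x
    have h2 : ‖(c⁻¹ : ℝ)‖ = c⁻¹ := by
      rw [Real.norm_of_nonneg (by positivity)]
    rw [h2, inv_mul_le_iff₀ hc0]
    calc ‖f x‖ ≤ ‖f‖ * ‖x‖ := h1
    _ ≤ c * ‖x‖ := by nlinarith [norm_nonneg x]
  have hδ : 0 < ε / (2 * c) := by positivity
  obtain ⟨N, hN⟩ := h (ε / (2 * c)) hδ
  have hsub : {x ∈ A | ε ≤ |f x|} ⊆ {x ∈ A | ε / (2 * c) < |g x|} := by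
    rintro x ⟨hxA, hx⟩
    refine ⟨hxA, ?_⟩
    have hgv : |g x| = c⁻¹ * |f x| := by
      have : g x = c⁻¹ * f x := rfl
      rw [this, abs_mul, abs_inv, abs_of_pos hc0]
    rw [hgv, div_lt_iff₀ (by positivity : (0:ℝ) < 2 * c)]
    have hinv : c⁻¹ * |f x| * (2 * c) = 2 * |f x| := by field_simp
    rw [hinv]
    linarith [hε.trans_le hx]
  exact (Set.finite_of_encard_le_coe (hN g hgnorm)).subset hsub

/-- The complement in `A` of any weak neighborhood of `0` is finite. -/
lemma uwn_compl_nhds_finite {X : Type*} [NormedAddCommGroup X] [NormedSpace ℝ X] {A : Set X}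
    (h : UniformlyWeaklyNull A) {U : Set (WeakSpace ℝ X)} (hU : U ∈ nhds 0) :
    (A \ (toWeakSpace ℝ X) ⁻¹' U).Finite := by
  obtain ⟨s, hs, hsU⟩ :=
    (LinearMap.hasBasis_weakBilin ((topDualPairing ℝ X).flip)).mem_iff.mp hU
  obtain ⟨I, r, hr, rfl⟩ := (SeminormFamily.basisSets_iff _).mp hs
  have key : (A \ (toWeakSpace ℝ X) ⁻¹' (id (Seminorm.ball
      (I.sup ((topDualPairing ℝ X).flip.toSeminormFamily) :
        Seminorm ℝ (WeakBilin (topDualPairing ℝ X).flip)) 0 r))).Finite := by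
    have hsub : A \ (toWeakSpace ℝ X) ⁻¹' (id (Seminorm.ball
        (I.sup ((topDualPairing ℝ X).flip.toSeminormFamily) :
          Seminorm ℝ (WeakBilin (topDualPairing ℝ X).flip)) 0 r)) ⊆
        ⋃ f ∈ I, {x ∈ A | r ≤ |f x|} := by
      rintro x ⟨hxA, hx⟩
      simp only [id, Set.mem_preimage, Seminorm.mem_ball_zero, not_lt] at hx
      have : ¬ ∀ f ∈ I, ((topDualPairing ℝ X).flip.toSeminormFamily f)
          (toWeakSpace ℝ X x) < r := by
        intro hall
        exact absurd (Seminorm.finset_sup_apply_lt hr hall) (fun h' => hx ((Seminorm.mem_ball_zero _).mpr h'))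
      push_neg at this
      obtain ⟨f, hfI, hf⟩ := this
      refine Set.mem_biUnion hfI ⟨hxA, ?_⟩
      have hval : ((topDualPairing ℝ X).flip.toSeminormFamily f) (toWeakSpace ℝ X x)
          = |f x| := by
        show ‖f x‖ = |f x|
        rfl
      rwa [hval] at hf
    exact (Set.Finite.biUnion I.finite_toSet (fun f _ => uwn_finite h f hr)).subset hsub
  exact key.subset (Set.diff_subset_diff_right (Set.preimage_mono hsU))

/-- If `A` is a bounded uniformly weakly null subset of a real Banach space `X`,
then `A ∪ {0}` is compact in the weak topology of `X`. -/
theorem statement3 {X : Type*} [NormedAddCommGroup X] [NormedSpace ℝ X] [CompleteSpace X]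
    (A : Set X) (hA : Bornology.IsBounded A) (h : UniformlyWeaklyNull A) :
    IsCompact (toWeakSpace ℝ X '' (A ∪ {0})) := by
  classical
  rw [isCompact_iff_finite_subcover]
  intro ι U hUopen hcover
  have h0mem : (0 : WeakSpace ℝ X) ∈ toWeakSpace ℝ X '' (A ∪ {0}) :=
    ⟨0, Or.inr rfl, map_zero _⟩
  obtain ⟨i₀, hi₀⟩ := Set.mem_iUnion.mp (hcover h0mem)
  have hfin : (A \ (toWeakSpace ℝ X) ⁻¹' (U i₀)).Finite :=
    uwn_compl_nhds_finite h ((hUopen i₀).mem_nhds hi₀)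
  have hfin' : (toWeakSpace ℝ X '' (A ∪ {0}) \ U i₀).Finite := by
    have : toWeakSpace ℝ X '' (A ∪ {0}) \ U i₀ ⊆
        toWeakSpace ℝ X '' (A \ (toWeakSpace ℝ X) ⁻¹' (U i₀)) := by
      rintro y ⟨⟨x, hx, rfl⟩, hyU⟩
      rcases hx with hx | rfl
      · exact ⟨x, ⟨hx, fun hmem => hyU hmem⟩, rfl⟩
      · exact absurd (by simpa using hi₀) hyU
    exact (hfin.image _).subset this
  obtain ⟨t, ht⟩ := isCompact_iff_finite_subcover.mp hfin'.isCompact U hUopen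
    (fun y hy => hcover hy.1)
  refine ⟨insert i₀ t, fun y hy => ?_⟩
  by_cases hyU : y ∈ U i₀
  · exact Set.mem_biUnion (Finset.mem_insert_self i₀ t) hyU
  · obtain ⟨j, hjt, hj⟩ := Set.mem_iUnion₂.mp (ht ⟨hy, hyU⟩)
    exact Set.mem_biUnion (Finset.mem_insert_of_mem hjt) hj
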